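/- arXiv:1807.02499 — 2 statements merged into one kernel-verified Lean document; each statement's English description precedes it below -/
import Mathlib

section
/- Let Λ̃ be a commutative ring, I ⊂ Λ̃ an ideal, and Z a finitely generated Λ̃-module that is infinite in cardinality and annihilated by some power of p. Suppose Λ̃ is module-finite over a subring Λ ≅ W[[T]] (W the Witt vectors of a finite field) such that Λ̃/pΛ̃ is generated over Λ/pΛ by finitely many nilpotent elements. Then Z ⊗_{Λ̃} Λ, viewed as a Λ-module, has positive μ-invariant; equivalently, (Z ⊗_{Λ̃} Λ)/p is infinite. -/
lemma aux_finite_of_submodule {R M : Type*} [Ring R] [AddCommGroup M] [Module R M]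
    (N : Submodule R M) (h1 : Finite N) (h2 : Finite (M ⧸ N)) : Finite M := by
  classical
  let sec : (M ⧸ N) → M := Function.surjInv (Submodule.mkQ_surjective N)
  have hsec : ∀ y, N.mkQ (sec y) = y := fun y =>
    Function.surjInv_eq (Submodule.mkQ_surjective N) y
  have hmem : ∀ x : M, x - sec (N.mkQ x) ∈ N := by
    intro x
    rw [← Submodule.Quotient.mk_eq_zero]
    show N.mkQ _ = 0
    rw [map_sub, hsec, sub_self]
  have : Function.Injective (fun x : M => ((N.mkQ x, ⟨x - sec (N.mkQ x), hmem x⟩) :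
      (M ⧸ N) × N)) := by
    intro x y hxy
    simp only [Prod.mk.injEq, Subtype.mk.injEq] at hxy
    obtain ⟨h1', h2'⟩ := hxy
    rw [h1'] at h2'
    exact sub_left_injective h2'
  exact Finite.of_injective _ this

lemma aux_finite_quotient_pow_smul {R M : Type*} [CommRing R] [AddCommGroup M] [Module R M]
    (J : Ideal R) (hJ : J.FG)
    (h : Finite (M ⧸ J • (⊤ : Submodule R M))) :
    ∀ n : ℕ, Finite (M ⧸ (J ^ n) • (⊤ : Submodule R M)) := by
  classical
  intro n
  induction n with
  | zero =>
    have : ((J ^ 0 : Ideal R) • (⊤ : Submodule R M)) = ⊤ := by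
      rw [pow_zero, Ideal.one_eq_top, Submodule.top_smul]
    haveI : Subsingleton (M ⧸ (J ^ 0) • (⊤ : Submodule R M)) :=
      Submodule.Quotient.subsingleton_iff.mpr this
    exact Finite.of_subsingleton
  | succ n ih =>
    -- generators of J ^ n
    obtain ⟨r, g, hg⟩ := Submodule.fg_iff_exists_fin_generating_family.mp (Submodule.FG.pow hJ n)
    have hgmem : ∀ i, g i ∈ J ^ n := fun i => by
      rw [← hg]; exact Submodule.subset_span ⟨i, rfl⟩
    -- the comparison map
    have hle : (J ^ (n + 1)) • (⊤ : Submodule R M) ≤ (J ^ n) • (⊤ : Submodule R M) :=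
      Submodule.smul_mono_left (Ideal.pow_le_pow_right n.le_succ)
    let q : (M ⧸ (J ^ (n + 1)) • (⊤ : Submodule R M)) →ₗ[R]
        (M ⧸ (J ^ n) • (⊤ : Submodule R M)) :=
      Submodule.mapQ _ _ LinearMap.id hle
    -- the maps μ i
    have hcomap : ∀ i : Fin r, J • (⊤ : Submodule R M) ≤
        Submodule.comap (g i • (LinearMap.id : M →ₗ[R] M))
          ((J ^ (n + 1)) • (⊤ : Submodule R M)) := by
      intro i x hx
      simp only [Submodule.mem_comap, LinearMap.smul_apply, LinearMap.id_apply]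
      have : (J ^ n) • (J • (⊤ : Submodule R M)) = (J ^ (n + 1)) • (⊤ : Submodule R M) := by
        rw [← Submodule.smul_assoc, pow_succ, Ideal.smul_eq_mul]
      rw [← this]
      exact Submodule.smul_mem_smul (hgmem i) hx
    let μ : Fin r → (M ⧸ J • (⊤ : Submodule R M)) →ₗ[R]
        (M ⧸ (J ^ (n + 1)) • (⊤ : Submodule R M)) := fun i =>
      Submodule.mapQ _ _ (g i • LinearMap.id) (hcomap i)
    let hmap : (Fin r → (M ⧸ J • (⊤ : Submodule R M))) →ₗ[R]
        (M ⧸ (J ^ (n + 1)) • (⊤ : Submodule R M)) :=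
      ∑ i : Fin r, (μ i).comp (LinearMap.proj i)
    -- kernel of q is contained in range of hmap
    have hker : LinearMap.ker q ≤ LinearMap.range hmap := by
      intro xb hxb
      obtain ⟨x, rfl⟩ := Submodule.Quotient.mk_surjective _ xb
      have hx : x ∈ (J ^ n) • (⊤ : Submodule R M) := by
        have : q (Submodule.Quotient.mk x) = Submodule.Quotient.mk x := by
          simp [q, Submodule.mapQ_apply]
        rw [LinearMap.mem_ker, this, Submodule.Quotient.mk_eq_zero] at hxb
        exact hxb
      refine Submodule.smul_induction_on hx ?_ ?_
      · intro a ha m _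
        have ha' : a ∈ Submodule.span R (Set.range g) := by rw [hg]; exact ha
        obtain ⟨c, hc⟩ := (Submodule.mem_span_range_iff_exists_fun R).mp ha'
        refine ⟨fun i => Submodule.Quotient.mk ((c i) • m), ?_⟩
        have : ∀ i : Fin r, (μ i) (Submodule.Quotient.mk ((c i) • m)) =
            Submodule.Quotient.mk ((g i * c i) • m) := by
          intro i
          rw [Submodule.mapQ_apply]
          congr 1
          show (g i • LinearMap.id (R := R) (M := M)) (c i • m) = (g i * c i) • m
          simp [smul_smul, mul_comm]
        calc hmap (fun i => Submodule.Quotient.mk ((c i) • m))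
            = ∑ i : Fin r, (μ i) (Submodule.Quotient.mk ((c i) • m)) := by
              simp [hmap, LinearMap.sum_apply]
          _ = Submodule.Quotient.mk (∑ i : Fin r, (g i * c i) • m) := by
              rw [show (Submodule.Quotient.mk (∑ i : Fin r, (g i * c i) • m) :
                    M ⧸ (J ^ (n + 1)) • (⊤ : Submodule R M)) =
                  Submodule.mkQ _ (∑ i : Fin r, (g i * c i) • m) from rfl,
                map_sum]
              exact Finset.sum_congr rfl fun i _ => this i
          _ = Submodule.Quotient.mk (a • m) := by
              congr 1
              rw [← Finset.sum_smul, ← hc]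
              congr 1
              exact Finset.sum_congr rfl fun i _ => mul_comm _ _
      · intro x y hx hy
        rw [Submodule.Quotient.mk_add]
        exact add_mem hx hy
    -- finish: ker q finite, quotient by ker q finite
    have hrange : Finite (LinearMap.range hmap) := by
      haveI : Finite (Fin r → M ⧸ J • (⊤ : Submodule R M)) := inferInstance
      exact Finite.of_surjective
        (fun v : Fin r → M ⧸ J • (⊤ : Submodule R M) =>
          (⟨hmap v, v, rfl⟩ : LinearMap.range hmap))
        (fun y => by obtain ⟨y, v, hv⟩ := y; exact ⟨v, Subtype.ext hv⟩)
    have hkerfin : Finite (LinearMap.ker q) :=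
      Finite.of_injective (Submodule.inclusion hker) (Submodule.inclusion_injective hker)
    have hquotfin : Finite ((M ⧸ (J ^ (n + 1)) • (⊤ : Submodule R M)) ⧸ LinearMap.ker q) := by
      haveI : Finite (LinearMap.range q) := Subtype.finite
      exact Finite.of_equiv _ (LinearMap.quotKerEquivRange q).symm.toEquiv
    exact aux_finite_of_submodule (LinearMap.ker q) hkerfin hquotfin

lemma aux_p_prime_in_powerseries (p : ℕ) [Fact p.Prime]
    (𝔽 : Type*) [Field 𝔽] [Fintype 𝔽] [CharP 𝔽 p]
    (lam : PowerSeries (WittVector p 𝔽)) (n : ℕ)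
    (h : lam ^ n ∈ Ideal.span ({(p : PowerSeries (WittVector p 𝔽))} : Set _)) :
    lam ∈ Ideal.span ({(p : PowerSeries (WittVector p 𝔽))} : Set _) := by
  classical
  set W := WittVector p 𝔽
  set Λ := PowerSeries W
  rcases Nat.eq_zero_or_pos n with rfl | hn
  · rw [pow_zero] at h
    exact Ideal.eq_top_iff_one _ |>.mpr h ▸ Submodule.mem_top
  -- the quotient map
  haveI := WittVector.isDiscreteValuationRing (k := 𝔽) (p := p)
  have hp0 : (p : W) ≠ 0 := WittVector.p_nonzero p 𝔽
  haveI : IsPrincipalIdealRing W := inferInstance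
  haveI : UniqueFactorizationMonoid W := inferInstance
  have hpprime : Prime (p : W) :=
    UniqueFactorizationMonoid.irreducible_iff_prime.mp (WittVector.irreducible p)
  haveI hIP : (Ideal.span ({(p : W)} : Set W)).IsPrime :=
    (Ideal.span_singleton_prime hp0).mpr hpprime
  haveI : IsDomain (W ⧸ Ideal.span ({(p : W)} : Set W)) := Ideal.Quotient.isDomain _
  set φ : Λ →+* PowerSeries (W ⧸ Ideal.span ({(p : W)} : Set W)) :=
    PowerSeries.map (Ideal.Quotient.mk (Ideal.span ({(p : W)} : Set W)))
  -- membership in span p iff all coefficients divisible by p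
  have hdvd : ∀ f : Λ, f ∈ Ideal.span ({(p : Λ)} : Set Λ) ↔
      ∀ k, (p : W) ∣ PowerSeries.coeff k f := by
    intro f
    constructor
    · rintro hf k
      rw [Ideal.mem_span_singleton] at hf
      obtain ⟨g, rfl⟩ := hf
      refine ⟨PowerSeries.coeff k g, ?_⟩
      rw [show ((p : Λ) * g) = PowerSeries.C (p : W) * g by rw [map_natCast],
        PowerSeries.coeff_C_mul]
    · intro hf
      rw [Ideal.mem_span_singleton]
      refine ⟨PowerSeries.mk fun k => (hf k).choose, ?_⟩
      refine PowerSeries.ext fun k => ?_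
      rw [show ((p : Λ) * _) = PowerSeries.C (p : W) * (PowerSeries.mk
        fun k => (hf k).choose) by rw [map_natCast], PowerSeries.coeff_C_mul,
        PowerSeries.coeff_mk]
      exact (hf k).choose_spec
  -- φ kills span p
  have hker : ∀ f : Λ, φ f = 0 ↔ f ∈ Ideal.span ({(p : Λ)} : Set Λ) := by
    intro f
    rw [hdvd]
    constructor
    · intro hf k
      have := congrArg (PowerSeries.coeff k) hf
      rw [PowerSeries.coeff_map, map_zero] at this
      rw [← Ideal.mem_span_singleton]
      exact Ideal.Quotient.eq_zero_iff_mem.mp this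
    · intro hf
      refine PowerSeries.ext fun k => ?_
      rw [PowerSeries.coeff_map, map_zero]
      rw [Ideal.Quotient.eq_zero_iff_mem, Ideal.mem_span_singleton]
      exact hf k
  rw [← hker] at h ⊢
  rw [map_pow] at h
  exact pow_eq_zero_iff hn.ne' |>.mp h


/-- Let `Λ = W[[T]]` (`W` the Witt vectors of a finite field `𝔽` of characteristic `p`),
`Λ̃` a module-finite `Λ`-algebra with a `Λ`-algebra retraction `π : Λ̃ → Λ` (with kernel
`I`), such that `Λ̃/pΛ̃` is generated over `Λ/pΛ` by finitely many nilpotent elements.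
If `Z` is a finitely generated `Λ̃`-module that is infinite and annihilated by a power
of `p`, then `(Z ⊗_{Λ̃} Λ)/p = Z/(IZ + pZ)` is infinite, i.e. `Z ⊗_{Λ̃} Λ` has positive
`μ`-invariant as a `Λ`-module. -/
theorem mu_positive_of_infinite_p_torsion
    (p : ℕ) [Fact p.Prime]
    (𝔽 : Type*) [Field 𝔽] [Fintype 𝔽] [CharP 𝔽 p]
    (Λt : Type*) [CommRing Λt]
    [Algebra (PowerSeries (WittVector p 𝔽)) Λt]
    [Module.Finite (PowerSeries (WittVector p 𝔽)) Λt]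
    (π : Λt →ₐ[PowerSeries (WittVector p 𝔽)] PowerSeries (WittVector p 𝔽))
    (hnil : ∃ s : Finset Λt,
      (∀ x ∈ s, ∃ n : ℕ, x ^ n ∈ Ideal.span ({(p : Λt)} : Set Λt)) ∧
      (Subalgebra.toSubmodule
          (Algebra.adjoin (PowerSeries (WittVector p 𝔽)) (s : Set Λt)) ⊔
        Submodule.restrictScalars (PowerSeries (WittVector p 𝔽))
          (Ideal.span ({(p : Λt)} : Set Λt)) = ⊤))
    (Z : Type*) [AddCommGroup Z] [Module Λt Z] [Module.Finite Λt Z] [Infinite Z]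
    (htor : ∃ t : ℕ, 1 ≤ t ∧ ∀ z : Z, ((p : Λt) ^ t) • z = 0) :
    Infinite (Z ⧸
      ((RingHom.ker π.toRingHom) • (⊤ : Submodule Λt Z) ⊔
        (Ideal.span ({(p : Λt)} : Set Λt)) • (⊤ : Submodule Λt Z))) := by
  classical
  set Λ : Type _ := PowerSeries (WittVector p 𝔽) with hΛ
  by_contra hfin
  rw [not_infinite_iff_finite] at hfin
  obtain ⟨s, hs1, hs2⟩ := hnil
  obtain ⟨t, ht1, ht2⟩ := htor
  set P : Ideal Λt := Ideal.span ({(p : Λt)} : Set Λt) with hP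
  set PΛ : Ideal Λ := Ideal.span ({(p : Λ)} : Set Λ) with hPΛ
  set K : Ideal Λt := Ideal.span (↑s : Set Λt) ⊔ P with hK
  -- π of span s lands in PΛ
  have hπs : ∀ b ∈ Ideal.span (↑s : Set Λt), π b ∈ PΛ := by
    intro b hb
    refine Submodule.span_induction (p := fun b _ => π b ∈ PΛ) ?_ ?_ ?_ ?_ hb
    · intro x hx
      obtain ⟨n, hn⟩ := hs1 x hx
      refine aux_p_prime_in_powerseries p 𝔽 (π x) n ?_
      rw [← map_pow]
      rw [Ideal.mem_span_singleton] at hn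
      obtain ⟨d, hd⟩ := hn
      rw [hd, map_mul, map_natCast]
      exact Ideal.mul_mem_right _ _ (Ideal.subset_span rfl)
    · simp
    · intro x y _ _ hx hy
      rw [map_add]; exact add_mem hx hy
    · intro r x _ hx
      rw [smul_eq_mul, map_mul]
      exact Ideal.mul_mem_left _ _ hx
  -- π of P lands in PΛ
  have hπP : ∀ c ∈ P, π c ∈ PΛ := by
    intro c hc
    rw [hP, Ideal.mem_span_singleton] at hc
    obtain ⟨d, rfl⟩ := hc
    rw [map_mul, map_natCast]
    exact Ideal.mul_mem_right _ _ (Ideal.subset_span rfl)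
  -- ker π ≤ K
  have hIK : RingHom.ker π.toRingHom ≤ K := by
    intro x hx
    rw [RingHom.mem_ker] at hx
    have hx' : x ∈ (⊤ : Submodule Λ Λt) := Submodule.mem_top
    rw [← hs2] at hx'
    obtain ⟨a, ha, c, hc, rfl⟩ := Submodule.mem_sup.mp hx'
    rw [Subalgebra.mem_toSubmodule] at ha
    rw [Submodule.restrictScalars_mem] at hc
    -- decompose a
    have hdec : ∃ lam : Λ, ∃ b ∈ Ideal.span (↑s : Set Λt),
        a = algebraMap Λ Λt lam + b := by
      refine Algebra.adjoin_induction (p := fun y _ => ∃ lam : Λ,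
        ∃ b ∈ Ideal.span (↑s : Set Λt), y = algebraMap Λ Λt lam + b) ?_ ?_ ?_ ?_ ha
      · intro y hy
        exact ⟨0, y, Ideal.subset_span hy, by simp⟩
      · intro r
        exact ⟨r, 0, zero_mem _, by simp; rfl⟩
      · rintro y z _ _ ⟨l1, b1, hb1, rfl⟩ ⟨l2, b2, hb2, rfl⟩
        exact ⟨l1 + l2, b1 + b2, add_mem hb1 hb2, by rw [map_add]; ring⟩
      · rintro y z _ _ ⟨l1, b1, hb1, rfl⟩ ⟨l2, b2, hb2, rfl⟩
        refine ⟨l1 * l2, algebraMap Λ Λt l1 * b2 + b1 * algebraMap Λ Λt l2 + b1 * b2,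
          ?_, by rw [map_mul]; ring⟩
        exact add_mem (add_mem (Ideal.mul_mem_left _ _ hb2)
          (Ideal.mul_mem_right _ _ hb1)) (Ideal.mul_mem_right _ _ hb1)
    obtain ⟨lam, b, hb, rfl⟩ := hdec
    -- compute π
    have hlam : lam = -(π b + π c) := by
      have h0 : π (algebraMap Λ Λt lam + b + c) = 0 := hx
      rw [map_add, map_add, AlgHom.commutes] at h0
      have h1 : lam + (π b + π c) = 0 := by
        have : (algebraMap Λ Λ) lam = lam := rfl
        rw [this] at h0
        linear_combination h0
      exact eq_neg_of_add_eq_zero_left h1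
    have hlamP : lam ∈ PΛ := by
      rw [hlam]
      exact neg_mem (add_mem (hπs b hb) (hπP c hc))
    -- conclude
    rw [hPΛ, Ideal.mem_span_singleton] at hlamP
    obtain ⟨u, hu⟩ := hlamP
    have halg : algebraMap Λ Λt lam ∈ P := by
      rw [hu, map_mul, map_natCast, hP]
      exact Ideal.mul_mem_right _ _ (Ideal.subset_span rfl)
    rw [hK]
    exact add_mem (add_mem (Ideal.mem_sup_right halg)
      (Ideal.mem_sup_left hb)) (Ideal.mem_sup_right hc)
  -- K is FG
  have hKfg : K.FG := Submodule.FG.sup ⟨s, rfl⟩ ⟨{(p : Λt)}, by simp [hP]⟩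
  -- K ≤ radical P
  have hKrad : K ≤ P.radical := by
    rw [hK]
    refine sup_le ?_ Ideal.le_radical
    rw [Ideal.span_le]
    intro x hx
    obtain ⟨n, hn⟩ := hs1 x hx
    exact ⟨n, hn⟩
  obtain ⟨m, hm⟩ := Ideal.exists_pow_le_of_le_radical_of_fg hKrad hKfg
  -- K ^ (m * t) kills Z
  have hbot : (K ^ (m * t)) • (⊤ : Submodule Λt Z) = ⊥ := by
    rw [pow_mul]
    refine le_bot_iff.mp ?_
    refine le_trans (Submodule.smul_mono_left (Ideal.pow_right_mono hm t)) ?_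
    have hPt : (P : Ideal Λt) ^ t = Ideal.span ({(p : Λt) ^ t} : Set Λt) := by
      rw [hP, Ideal.span_singleton_pow]
    rw [hPt]
    refine Submodule.smul_le.mpr ?_
    intro r hr z _
    rw [Ideal.mem_span_singleton] at hr
    obtain ⟨d, rfl⟩ := hr
    rw [mul_comm, mul_smul, ht2 z, smul_zero]
    exact Submodule.zero_mem ⊥
  -- finiteness of Z / K•⊤
  have hle2 : (RingHom.ker π.toRingHom) • (⊤ : Submodule Λt Z) ⊔ P • (⊤ : Submodule Λt Z)
      ≤ K • (⊤ : Submodule Λt Z) :=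
    sup_le (Submodule.smul_mono_left hIK) (Submodule.smul_mono_left le_sup_right)
  have hfinK : Finite (Z ⧸ K • (⊤ : Submodule Λt Z)) := by
    have hle2' : (RingHom.ker π.toRingHom • (⊤ : Submodule Λt Z) ⊔ P • ⊤) ≤
        Submodule.comap (LinearMap.id : Z →ₗ[Λt] Z) (K • ⊤) := by
      rw [Submodule.comap_id]; exact hle2
    refine Finite.of_surjective
      (Submodule.mapQ (RingHom.ker π.toRingHom • (⊤ : Submodule Λt Z) ⊔ P • ⊤)
        (K • (⊤ : Submodule Λt Z)) LinearMap.id hle2') ?_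
    intro y
    obtain ⟨z, rfl⟩ := Submodule.Quotient.mk_surjective _ y
    exact ⟨Submodule.Quotient.mk z, by rw [Submodule.mapQ_apply, LinearMap.id_apply]⟩
  have := aux_finite_quotient_pow_smul K hKfg hfinK (m * t)
  rw [hbot] at this
  haveI := this
  haveI : Finite Z := Finite.of_equiv (Z ⧸ (⊥ : Submodule Λt Z))
    (Submodule.quotEquivOfEqBot (⊥ : Submodule Λt Z) rfl).toEquiv
  exact not_finite Z
end

section
/- Let G be a profinite group, X a closed normal abelian pro-p subgroup with G/X ≅ Γ = ℤ_p topologically generated by γ. Then the extension 1 → X → G → Γ → 1 is split, and for each n ≥ 0, the commutator subgroup of the preimage G_n of Γ^{p^n} equals (γ^{p^n} − 1)X, i.e. the maximal abelian quotient of G_n sits in a split exact sequence 1 → X/(γ^{p^n}−1)X → G_n^{ab} → Γ^{p^n} → 1. -/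
open scoped Pointwise
open Filter Topology
open scoped commutatorElement

section AuxFinal

private lemma aux_comm1 {G : Type*} [Group G] (a b c : G) :
    ⁅a * b, c⁆ = a * ⁅b, c⁆ * a⁻¹ * ⁅a, c⁆ := by group

private lemma aux_comm2 {G : Type*} [Group G] (a b c : G) :
    ⁅a, b * c⁆ = ⁅a, b⁆ * (b * ⁅a, c⁆ * b⁻¹) := by group

end AuxFinal

section Aux

variable {G : Type*} [Group G] [TopologicalSpace G] [IsTopologicalGroup G]
  [CompactSpace G] [TotallyDisconnectedSpace G] [T2Space G]

private lemma aux_basis {V : Set G} (hV : V ∈ 𝓝 (1 : G)) :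
    ∃ U : OpenNormalSubgroup G, (U : Set G) ⊆ V := by
  obtain ⟨W, ⟨h1W, hW⟩, hWV⟩ := (nhds_basis_clopen (1 : G)).mem_iff.mp hV
  obtain ⟨U, hU⟩ := IsTopologicalGroup.exist_openNormalSubgroup_sub_clopen_nhds_of_one hW h1W
  exact ⟨U, fun x hx => hWV (hU hx)⟩

private lemma aux_padic_index (p : ℕ) [Fact p.Prime] (A : Subgroup (Multiplicative ℤ_[p]))
    (hA : A.index ≠ 0) : ∃ j : ℕ, A.index = p ^ j := by
  classical
  set m := A.index with hm
  set j := m.factorization p with hj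
  have hmeq : p ^ j * (m / p ^ j) = m := Nat.ordProj_mul_ordCompl_eq_self m p
  have hnd : ¬ p ∣ (m / p ^ j) := Nat.not_dvd_ordCompl Fact.out hA
  have hu : IsUnit ((m / p ^ j : ℕ) : ℤ_[p]) := by
    by_contra hcon
    rw [PadicInt.not_isUnit_iff] at hcon
    have : ((m / p ^ j : ℕ) : ℤ_[p]) = (((m / p ^ j : ℕ) : ℤ) : ℤ_[p]) := (Int.cast_natCast _).symm
    rw [this] at hcon
    have := (PadicInt.norm_int_lt_one_iff_dvd _).mp hcon
    exact hnd (by exact_mod_cast this)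
  obtain ⟨u, hu⟩ := hu
  haveI : NeZero (p ^ j) := ⟨pow_ne_zero _ (Nat.Prime.ne_zero Fact.out)⟩
  set f : Multiplicative ℤ_[p] →* Multiplicative (ZMod (p ^ j)) :=
    AddMonoidHom.toMultiplicative (PadicInt.toZModPow j).toAddMonoidHom with hf
  have hfs : Function.Surjective f := by
    intro c
    refine ⟨Multiplicative.ofAdd ((c.toAdd.val : ℤ_[p])), ?_⟩
    show Multiplicative.ofAdd ((PadicInt.toZModPow j) ((c.toAdd.val : ℤ_[p]))) = c
    rw [map_natCast, ZMod.natCast_zmod_val, ofAdd_toAdd]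
  have hker : f.ker ≤ A := by
    intro z hz
    rw [MonoidHom.mem_ker] at hz
    have hz' : z.toAdd ∈ Ideal.span {(p : ℤ_[p]) ^ j} := by
      rw [← PadicInt.ker_toZModPow, RingHom.mem_ker]
      exact hz
    obtain ⟨w, hw⟩ := Ideal.mem_span_singleton.mp hz'
    have hzz : z = (Multiplicative.ofAdd ((↑u⁻¹ : ℤ_[p]) * w)) ^ m := by
      apply_fun Multiplicative.toAdd
      rw [toAdd_pow, toAdd_ofAdd, hw, nsmul_eq_mul]
      have h1 : (m : ℤ_[p]) = (p : ℤ_[p]) ^ j * (u : ℤ_[p]) := by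
        rw [hu]; exact_mod_cast hmeq.symm
      rw [h1, mul_assoc, ← mul_assoc (u : ℤ_[p]), Units.mul_inv, one_mul]
    rw [hzz]
    exact A.pow_index_mem _
  have hkeridx : f.ker.index = p ^ j := by
    rw [Subgroup.index_ker, MonoidHom.range_eq_top_of_surjective f hfs, Subgroup.card_top,
      Nat.card_congr Multiplicative.toAdd, Nat.card_zmod]
  obtain ⟨i, _, hi⟩ := (Nat.dvd_prime_pow Fact.out).mp (hkeridx ▸ Subgroup.index_dvd_of_le hker)
  exact ⟨i, hi⟩

private lemma aux_index {p : ℕ} [Fact p.Prime] (φ : G →* Multiplicative ℤ_[p])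
    (hφs : Function.Surjective φ) (X : Subgroup G) (hX : X = φ.ker)
    (hXpro : ∀ U : Subgroup X, IsOpen (U : Set X) → ∃ k : ℕ, U.index = p ^ k)
    (U : OpenNormalSubgroup G) : ∃ k : ℕ, (U : Subgroup G).index = p ^ k := by
  haveI : Finite (G ⧸ (U : Subgroup G)) := (U : Subgroup G).quotient_finite_of_isOpen U.isOpen
  haveI : (U : Subgroup G).FiniteIndex := Subgroup.finiteIndex_of_finite_quotient
  have hUne : (U : Subgroup G).index ≠ 0 := Subgroup.FiniteIndex.index_ne_zero
  obtain ⟨a, ha⟩ := hXpro ((U : Subgroup G).subgroupOf X) (by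
    have : (((U : Subgroup G).subgroupOf X : Subgroup X) : Set X) = X.subtype ⁻¹' (U : Set G) := rfl
    rw [this]; exact U.isOpen.preimage continuous_subtype_val)
  have hUK : (U : Subgroup G) ≤ X ⊔ (U : Subgroup G) := le_sup_right
  have hKidx : ∃ b, (X ⊔ (U : Subgroup G)).index = p ^ b := by
    have h1 : (X ⊔ (U : Subgroup G)).index ∣ (U : Subgroup G).index :=
      Subgroup.index_dvd_of_le hUK
    have h2 : (X ⊔ (U : Subgroup G)).index ≠ 0 := fun h => hUne (zero_dvd_iff.mp (h ▸ h1))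
    have hcomap : Subgroup.comap φ (Subgroup.map φ (X ⊔ (U : Subgroup G)))
        = X ⊔ (U : Subgroup G) := by
      rw [Subgroup.comap_map_eq, sup_eq_left.mpr (hX ▸ (le_sup_left : X ≤ _))]
    have heq : (X ⊔ (U : Subgroup G)).index = (Subgroup.map φ (X ⊔ (U : Subgroup G))).index := by
      conv_lhs => rw [← hcomap]
      exact Subgroup.index_comap_of_surjective _ hφs
    obtain ⟨b, hb⟩ := aux_padic_index p (Subgroup.map φ (X ⊔ (U : Subgroup G))) (heq ▸ h2)
    exact ⟨b, heq.trans hb⟩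
  obtain ⟨b, hb⟩ := hKidx
  refine ⟨a + b, ?_⟩
  have h3 := Subgroup.relIndex_mul_index hUK
  rw [Subgroup.relIndex_sup_right] at h3
  rw [← h3, hb, pow_add]
  congr 1

private lemma aux_key {p : ℕ} [Fact p.Prime] (φ : G →* Multiplicative ℤ_[p])
    (hφs : Function.Surjective φ) (X : Subgroup G) (hX : X = φ.ker)
    (hXpro : ∀ U : Subgroup X, IsOpen (U : Set X) → ∃ k : ℕ, U.index = p ^ k) :
    ∀ g : G, ∀ V ∈ 𝓝 (1 : G), ∃ k : ℕ, ∀ c : ℤ, (p : ℤ) ^ k ∣ c → g ^ c ∈ V := by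
  intro g V hV
  obtain ⟨U, hUV⟩ := aux_basis hV
  obtain ⟨k, hk⟩ := aux_index φ hφs X hX hXpro U
  refine ⟨k, fun c hc => ?_⟩
  obtain ⟨d, rfl⟩ := hc
  have h1 : g ^ ((p : ℤ) ^ k) ∈ (U : Subgroup G) := by
    have h2 := (U : Subgroup G).pow_index_mem g
    rw [hk] at h2
    have h4 : g ^ ((p : ℤ) ^ k) = g ^ (p ^ k : ℕ) := by
      rw [← zpow_natCast]; norm_cast
    rw [h4]; exact h2
  have h5 := (U : Subgroup G).zpow_mem h1 d
  rw [← zpow_mul] at h5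
  exact hUV h5

private lemma aux_pow {p : ℕ} [Fact p.Prime]
    (key : ∀ g : G, ∀ V ∈ 𝓝 (1 : G), ∃ k : ℕ, ∀ c : ℤ, (p : ℤ) ^ k ∣ c → g ^ c ∈ V)
    (g₀ : G) :
    ∃ s : Multiplicative ℤ_[p] →* G, Continuous s ∧
      ∀ m : ℤ, s (Multiplicative.ofAdd ((m : ℤ_[p]))) = g₀ ^ m := by
  letI : UniformSpace G := IsTopologicalGroup.rightUniformSpace G
  have fact3 : ∀ (c : ℤ) (k : ℕ), ((c : ℤ_[p]) ∈ Ideal.span {(p : ℤ_[p]) ^ k}) →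
      (p : ℤ) ^ k ∣ c := by
    intro c k hc
    have h2 : ‖((c : ℤ) : ℤ_[p])‖ ≤ (p : ℝ) ^ (-(k : ℤ)) :=
      (PadicInt.norm_le_pow_iff_mem_span_pow _ k).mpr hc
    exact_mod_cast PadicInt.norm_int_le_pow_iff_dvd.mp h2
  have fact2 : ∀ (z : ℤ_[p]) (n : ℕ), ((z.appr n : ℤ) : ℤ_[p]) - z ∈
      Ideal.span {(p : ℤ_[p]) ^ n} := by
    intro z n
    have h := neg_mem (PadicInt.appr_spec n z)
    rw [neg_sub] at h
    have e : ((z.appr n : ℤ) : ℤ_[p]) = ((z.appr n : ℕ) : ℤ_[p]) := by push_cast; ring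
    rw [e]
    exact h
  set F : ℤ_[p] → ℕ → G := fun z n => g₀ ^ ((z.appr n : ℤ)) with hF
  have hdiv : ∀ (z : ℤ_[p]) (k n : ℕ), k ≤ n →
      (p : ℤ) ^ k ∣ ((z.appr n : ℤ) - (z.appr k : ℤ)) := by
    intro z k n hkn
    have h := PadicInt.dvd_appr_sub_appr z k n hkn
    have h2 : ((p ^ k : ℕ) : ℤ) ∣ (((z.appr n - z.appr k : ℕ)) : ℤ) := Int.natCast_dvd_natCast.mpr h
    rw [Int.ofNat_sub (PadicInt.appr_mono z hkn)] at h2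
    exact_mod_cast h2
  have hcauchy : ∀ z, CauchySeq (F z) := by
    intro z
    rw [cauchySeq_iff]
    intro W hW
    rw [uniformity_eq_comap_nhds_one'] at hW
    obtain ⟨V, hV, hVW⟩ := hW
    obtain ⟨k, hk⟩ := key g₀ V hV
    refine ⟨k, fun a ha b hb => hVW ?_⟩
    show F z b * (F z a)⁻¹ ∈ V
    rw [hF]
    show g₀ ^ ((z.appr b : ℤ)) * (g₀ ^ ((z.appr a : ℤ)))⁻¹ ∈ V
    rw [← zpow_neg, ← zpow_add]
    apply hk
    have d1 := hdiv z k b hb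
    have d2 := hdiv z k a ha
    have := dvd_sub d1 d2
    simpa [sub_eq_add_neg] using this
  choose L hL using fun z => cauchySeq_tendsto_of_complete (hcauchy z)
  have hsmall : ∀ (c : ℕ → ℤ), (∀ n, (p : ℤ) ^ n ∣ c n) →
      Tendsto (fun n => g₀ ^ (c n)) atTop (𝓝 1) := by
    intro c hc
    rw [Filter.tendsto_def]
    intro V hV
    obtain ⟨k, hk⟩ := key g₀ V hV
    filter_upwards [eventually_ge_atTop k] with n hn
    exact hk _ (dvd_trans (pow_dvd_pow _ hn) (hc n))
  have hmul : ∀ z w, L (z + w) = L z * L w := by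
    intro z w
    have hm : ∀ n, (((z + w).appr n : ℤ) - (z.appr n : ℤ) - (w.appr n : ℤ) : ℤ) =
        ((z + w).appr n : ℤ) - (z.appr n : ℤ) - (w.appr n : ℤ) := fun n => rfl
    have h1 : Tendsto (fun n => F z n * F w n *
        g₀ ^ (((z + w).appr n : ℤ) - (z.appr n : ℤ) - (w.appr n : ℤ))) atTop
        (𝓝 (L z * L w * 1)) := by
      refine ((hL z).mul (hL w)).mul (hsmall _ fun n => fact3 _ n ?_)
      have h2 := fact2 (z + w) n
      have h3 := sub_mem (sub_mem h2 (fact2 z n)) (fact2 w n)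
      convert h3 using 1
      push_cast
      ring
    have h2 : (fun n => F z n * F w n *
        g₀ ^ (((z + w).appr n : ℤ) - (z.appr n : ℤ) - (w.appr n : ℤ))) = F (z + w) := by
      funext n
      rw [hF]
      show g₀ ^ ((z.appr n : ℤ)) * g₀ ^ ((w.appr n : ℤ)) * g₀ ^ _ = g₀ ^ (((z+w).appr n : ℤ))
      rw [← zpow_add, ← zpow_add]
      congr 1
      ring
    rw [h2] at h1
    have := tendsto_nhds_unique (hL (z + w)) h1
    simpa using this
  have hint : ∀ m : ℤ, L ((m : ℤ_[p])) = g₀ ^ m := by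
    intro m
    have h1 : Tendsto (fun n => g₀ ^ m * g₀ ^ ((((m : ℤ_[p]).appr n : ℤ)) - m)) atTop
        (𝓝 (g₀ ^ m * 1)) := by
      refine tendsto_const_nhds.mul (hsmall _ fun n => fact3 _ n ?_)
      have h2 := fact2 (m : ℤ_[p]) n
      convert h2 using 1
      push_cast
      ring
    have h2 : (fun n => g₀ ^ m * g₀ ^ ((((m : ℤ_[p]).appr n : ℤ)) - m)) = F (m : ℤ_[p]) := by
      funext n
      rw [hF]
      show g₀ ^ m * g₀ ^ _ = g₀ ^ (((m : ℤ_[p]).appr n : ℤ))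
      rw [← zpow_add]
      congr 1
      ring
    rw [h2] at h1
    simpa using tendsto_nhds_unique (hL _) h1
  have hone : L 0 = 1 := by
    have := hint 0
    simpa using this
  refine ⟨MonoidHom.mk' (fun z => L (Multiplicative.toAdd z)) (fun z w => hmul _ _), ?_,
    fun m => hint m⟩
  apply continuous_of_continuousAt_one
  have hL0 : ContinuousAt L 0 := by
    rw [ContinuousAt, hone, Filter.tendsto_def]
    intro V hV
    obtain ⟨U, hUV⟩ := aux_basis hV
    obtain ⟨k, hk⟩ := key g₀ U (U.isOpen.mem_nhds U.one_mem)
    have hsub : Metric.ball (0 : ℤ_[p]) ((p : ℝ) ^ (-(k : ℤ))) ⊆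
        {z : ℤ_[p] | z ∈ Ideal.span {(p : ℤ_[p]) ^ k}} := by
      intro z hz
      have hz' : ‖z‖ ≤ (p : ℝ) ^ (-(k : ℤ)) := by
        have := mem_ball_iff_norm.mp hz
        rw [sub_zero] at this
        exact le_of_lt this
      exact (PadicInt.norm_le_pow_iff_mem_span_pow z k).mp hz'
    have hball : {z : ℤ_[p] | z ∈ Ideal.span {(p : ℤ_[p]) ^ k}} ∈ 𝓝 (0 : ℤ_[p]) :=
      mem_of_superset (Metric.ball_mem_nhds (0 : ℤ_[p])
        (zpow_pos (show (0:ℝ) < (p:ℝ) by exact_mod_cast (Fact.out : p.Prime).pos) _)) hsub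
    refine mem_of_superset hball ?_
    intro z hz
    show L z ∈ V
    refine hUV ?_
    have hclosed : IsClosed ((U : Subgroup G) : Set G) := U.toOpenSubgroup.isClosed
    refine hclosed.mem_of_tendsto (hL z) ?_
    filter_upwards [eventually_ge_atTop k] with n hn
    show F z n ∈ (U : Subgroup G)
    apply hk
    apply fact3
    have h1 : ((z.appr n : ℤ) : ℤ_[p]) - z ∈ Ideal.span {(p : ℤ_[p]) ^ k} := by
      have hle : Ideal.span {(p : ℤ_[p]) ^ n} ≤ Ideal.span {(p : ℤ_[p]) ^ k} :=
        Ideal.span_singleton_le_span_singleton.mpr (pow_dvd_pow _ hn)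
      exact hle (fact2 z n)
    have := add_mem h1 hz
    simpa using this
  show ContinuousAt (fun z : Multiplicative ℤ_[p] => L (Multiplicative.toAdd z)) 1
  exact ContinuousAt.comp (x := (1 : Multiplicative ℤ_[p])) (f := ⇑Multiplicative.toAdd)
    (g := L) hL0 continuous_toAdd.continuousAt

end Aux

/-- Let `G` be a profinite group, `X` a closed normal abelian pro-`p` subgroup with
`G/X ≅ Γ = ℤ_p` (via a continuous surjection `φ` with kernel `X`).  Then the extension
`1 → X → G → Γ → 1` is split, and for each `n ≥ 0` the (closed) commutator subgroup of
the preimage `G_n` of `Γ^{p^n}` equals `(γ^{p^n} − 1)X`, the closed subgroup generated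
by the elements `γ̃^{p^n} x γ̃^{−p^n} x⁻¹` for `x ∈ X` and a lift `γ̃^{p^n}` of
`γ^{p^n}`. -/
theorem split_extension_and_commutator_of_Zp_quotient
    {G : Type*} [Group G] [TopologicalSpace G] [IsTopologicalGroup G]
    [CompactSpace G] [TotallyDisconnectedSpace G] [T2Space G]
    (p : ℕ) [Fact p.Prime]
    (φ : G →* Multiplicative ℤ_[p]) (hφc : Continuous φ) (hφs : Function.Surjective φ)
    (X : Subgroup G) (hX : X = φ.ker)
    (hXab : ∀ x ∈ X, ∀ y ∈ X, x * y = y * x)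
    (hXpro : ∀ U : Subgroup X, IsOpen (U : Set X) → ∃ k : ℕ, U.index = p ^ k) :
    (∃ s : Multiplicative ℤ_[p] →* G, Continuous s ∧ ∀ z, φ (s z) = z) ∧
    (∀ (n : ℕ) (γn : G), φ γn = Multiplicative.ofAdd ((p : ℤ_[p]) ^ n) →
      (Subgroup.map
          (Subgroup.comap φ
            ((Subgroup.zpowers
              (Multiplicative.ofAdd ((p : ℤ_[p]) ^ n))).topologicalClosure)).subtype
          (commutator
            ↥(Subgroup.comap φ
              ((Subgroup.zpowers
                (Multiplicative.ofAdd ((p : ℤ_[p]) ^ n))).topologicalClosure)))).topologicalClosure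
        = (Subgroup.closure
            {g : G | ∃ x ∈ X, g = γn * x * γn⁻¹ * x⁻¹}).topologicalClosure) := by
  constructor
  · -- splitting
    obtain ⟨g₀, hg₀⟩ := hφs (Multiplicative.ofAdd (1 : ℤ_[p]))
    obtain ⟨s, hsc, hsint⟩ := aux_pow (aux_key φ hφs X hX hXpro) g₀
    refine ⟨s, hsc, ?_⟩
    have hd : DenseRange (fun m : ℤ => (Multiplicative.ofAdd ((m : ℤ_[p])) :
        Multiplicative ℤ_[p])) := PadicInt.denseRange_intCast
    have heq : (fun z => φ (s z)) = (fun z : Multiplicative ℤ_[p] => z) := by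
      refine hd.equalizer (hφc.comp hsc) continuous_id ?_
      funext m
      show φ (s (Multiplicative.ofAdd ((m : ℤ_[p])))) = Multiplicative.ofAdd ((m : ℤ_[p]))
      rw [hsint m, map_zpow, hg₀, ← ofAdd_zsmul]
      congr 1
      simp
    intro z
    exact congrFun heq z
  · -- commutator computation
    intro n γn hγ
    set Γn := (Subgroup.zpowers
      (Multiplicative.ofAdd ((p : ℤ_[p]) ^ n))).topologicalClosure with hΓn
    set Gn := Subgroup.comap φ Γn with hGn
    set S : Set G := {g : G | ∃ x ∈ X, g = γn * x * γn⁻¹ * x⁻¹} with hS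
    set D := (Subgroup.closure S).topologicalClosure with hD
    haveI hXn : X.Normal := hX ▸ φ.normal_ker
    have hmemX : ∀ g : G, g ∈ X ↔ φ g = 1 := fun g => by rw [hX]; exact φ.mem_ker
    have hXGn : X ≤ Gn := by
      intro x hx
      rw [hGn, Subgroup.mem_comap, (hmemX x).mp hx]
      exact Γn.one_mem
    have hγGn : γn ∈ Gn := by
      rw [hGn, Subgroup.mem_comap, hγ]
      exact (Subgroup.le_topologicalClosure _) (Subgroup.mem_zpowers _)
    have hXclosed : IsClosed (X : Set G) := by
      have : (X : Set G) = φ ⁻¹' {1} := by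
        ext g
        simp only [Set.mem_preimage, Set.mem_singleton_iff, SetLike.mem_coe, hmemX g]
      rw [this]
      exact isClosed_singleton.preimage hφc
    have hSX : S ⊆ (X : Set G) := by
      rintro g ⟨x, hx, rfl⟩
      exact X.mul_mem (hXn.conj_mem x hx γn) (X.inv_mem hx)
    have hDX : D ≤ X :=
      Subgroup.topologicalClosure_minimal _ ((Subgroup.closure_le X).mpr hSX) hXclosed
    have hDclosed : IsClosed (D : Set G) := Subgroup.isClosed_topologicalClosure _
    have hconjD : ∀ a : G, (∀ g ∈ S, a * g * a⁻¹ ∈ Subgroup.closure S) →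
        ∀ d ∈ D, a * d * a⁻¹ ∈ D := by
      intro a ha d hd
      have h1 : ∀ g ∈ Subgroup.closure S, a * g * a⁻¹ ∈ Subgroup.closure S := by
        intro g hg
        have hle : Subgroup.closure S ≤
            Subgroup.comap ((MulAut.conj a).toMonoidHom : G →* G) (Subgroup.closure S) := by
          rw [Subgroup.closure_le]
          intro g hg
          simpa using ha g hg
        simpa using hle hg
      have hcont : Continuous fun g : G => a * g * a⁻¹ :=
        (continuous_const.mul continuous_id).mul continuous_const
      have h2 : (fun g : G => a * g * a⁻¹) '' ((Subgroup.closure S : Subgroup G) : Set G) ⊆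
          ((Subgroup.closure S : Subgroup G) : Set G) := by
        rintro _ ⟨g, hg, rfl⟩
        exact h1 g hg
      exact closure_mono h2 ((image_closure_subset_closure_image hcont) ⟨d, hd, rfl⟩)
    have hτS : ∀ g ∈ S, γn * g * γn⁻¹ ∈ S := by
      rintro _ ⟨x, hx, rfl⟩
      refine ⟨γn * x * γn⁻¹, hXn.conj_mem x hx γn, ?_⟩
      group
    have hτS' : ∀ g ∈ S, γn⁻¹ * g * γn ∈ S := by
      rintro _ ⟨x, hx, rfl⟩
      refine ⟨γn⁻¹ * x * γn, by simpa using hXn.conj_mem x hx γn⁻¹, ?_⟩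
      group
    let T : Subgroup G :=
      { carrier := {u : G | (∀ y ∈ X, u * y * u⁻¹ * y⁻¹ ∈ D) ∧
          (∀ y ∈ X, u⁻¹ * y * u * y⁻¹ ∈ D) ∧
          (∀ d ∈ D, u * d * u⁻¹ ∈ D) ∧ (∀ d ∈ D, u⁻¹ * d * u ∈ D)}
        one_mem' := ⟨fun y _ => by simpa using D.one_mem, fun y _ => by simpa using D.one_mem,
          fun d hd => by simpa using hd, fun d hd => by simpa using hd⟩
        mul_mem' := by
          rintro a b ⟨ha1, ha2, ha3, ha4⟩ ⟨hb1, hb2, hb3, hb4⟩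
          refine ⟨?_, ?_, ?_, ?_⟩
          · intro y hy
            have e : (a * b) * y * (a * b)⁻¹ * y⁻¹ =
                (a * (b * y * b⁻¹ * y⁻¹) * a⁻¹) * (a * y * a⁻¹ * y⁻¹) := by group
            rw [e]
            exact D.mul_mem (ha3 _ (hb1 y hy)) (ha1 y hy)
          · intro y hy
            have e : (a * b)⁻¹ * y * (a * b) * y⁻¹ =
                (b⁻¹ * (a⁻¹ * y * a * y⁻¹) * b) * (b⁻¹ * y * b * y⁻¹) := by group
            rw [e]
            exact D.mul_mem (hb4 _ (ha2 y hy)) (hb2 y hy)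
          · intro d hd
            have e : (a * b) * d * (a * b)⁻¹ = a * (b * d * b⁻¹) * a⁻¹ := by group
            rw [e]
            exact ha3 _ (hb3 d hd)
          · intro d hd
            have e : (a * b)⁻¹ * d * (a * b) = b⁻¹ * (a⁻¹ * d * a) * b := by group
            rw [e]
            exact hb4 _ (ha4 d hd)
        inv_mem' := by
          rintro a ⟨ha1, ha2, ha3, ha4⟩
          exact ⟨fun y hy => by simpa using ha2 y hy, fun y hy => by simpa using ha1 y hy,
            fun d hd => by simpa using ha4 d hd, fun d hd => by simpa using ha3 d hd⟩ }
    have hTclosed : IsClosed (T : Set G) := by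
      have hrepr : (T : Set G) =
          (⋂ y ∈ X, (fun u : G => u * y * u⁻¹ * y⁻¹) ⁻¹' (D : Set G)) ∩
          ((⋂ y ∈ X, (fun u : G => u⁻¹ * y * u * y⁻¹) ⁻¹' (D : Set G)) ∩
          ((⋂ d ∈ (D : Set G), (fun u : G => u * d * u⁻¹) ⁻¹' (D : Set G)) ∩
          (⋂ d ∈ (D : Set G), (fun u : G => u⁻¹ * d * u) ⁻¹' (D : Set G)))) := by
        ext u
        simp only [Set.mem_inter_iff, Set.mem_iInter, Set.mem_preimage, SetLike.mem_coe]
        constructor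
        · rintro ⟨h1, h2, h3, h4⟩
          exact ⟨h1, h2, h3, h4⟩
        · rintro ⟨h1, h2, h3, h4⟩
          exact ⟨h1, h2, h3, h4⟩
      rw [hrepr]
      refine IsClosed.inter ?_ (IsClosed.inter ?_ (IsClosed.inter ?_ ?_))
      · exact isClosed_biInter fun y _ => hDclosed.preimage
          (((continuous_id.mul continuous_const).mul continuous_inv).mul continuous_const)
      · exact isClosed_biInter fun y _ => hDclosed.preimage
          (((continuous_inv.mul continuous_const).mul continuous_id).mul continuous_const)
      · exact isClosed_biInter fun d _ => hDclosed.preimage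
          ((continuous_id.mul continuous_const).mul continuous_inv)
      · exact isClosed_biInter fun d _ => hDclosed.preimage
          ((continuous_inv.mul continuous_const).mul continuous_id)
    have hγT : γn ∈ T := by
      refine ⟨?_, ?_, ?_, ?_⟩
      · intro y hy
        exact (Subgroup.le_topologicalClosure _) (Subgroup.subset_closure ⟨y, hy, rfl⟩)
      · intro y hy
        have h1 : γn * (γn⁻¹ * y * γn) * γn⁻¹ * (γn⁻¹ * y * γn)⁻¹ ∈ S :=
          ⟨γn⁻¹ * y * γn, by simpa using hXn.conj_mem y hy γn⁻¹, rfl⟩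
        have h2 : γn * (γn⁻¹ * y * γn) * γn⁻¹ * (γn⁻¹ * y * γn)⁻¹ ∈ D :=
          (Subgroup.le_topologicalClosure _) (Subgroup.subset_closure h1)
        have e : γn⁻¹ * y * γn * y⁻¹ =
            (γn * (γn⁻¹ * y * γn) * γn⁻¹ * (γn⁻¹ * y * γn)⁻¹)⁻¹ := by group
        rw [e]
        exact D.inv_mem h2
      · exact fun d hd => hconjD γn (fun g hg => Subgroup.subset_closure (hτS g hg)) d hd
      · intro d hd
        have := hconjD γn⁻¹ (fun g hg => by
          simpa using Subgroup.subset_closure (hτS' g hg)) d hd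
        simpa using this
    have hHtopT : (Subgroup.zpowers γn).topologicalClosure ≤ T :=
      Subgroup.topologicalClosure_minimal _ (Subgroup.zpowers_le.mpr hγT) hTclosed
    have hcomm1 : ∀ v ∈ (Subgroup.zpowers γn).topologicalClosure, Commute γn v := by
      intro v hv
      have hsub : ((Subgroup.zpowers γn) : Set G) ⊆ {w : G | γn * w = w * γn} := by
        rintro _ ⟨m, rfl⟩
        exact ((Commute.refl γn).zpow_right m).eq
      have hcl : IsClosed {w : G | γn * w = w * γn} :=
        isClosed_eq (continuous_const.mul continuous_id) (continuous_id.mul continuous_const)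
      exact closure_minimal hsub hcl hv
    have hcomm : ∀ u ∈ (Subgroup.zpowers γn).topologicalClosure,
        ∀ v ∈ (Subgroup.zpowers γn).topologicalClosure, Commute u v := by
      intro u hu v hv
      have hsub : ((Subgroup.zpowers γn) : Set G) ⊆ {w : G | w * v = v * w} := by
        rintro _ ⟨m, rfl⟩
        exact ((hcomm1 v hv).zpow_left m).eq
      have hcl : IsClosed {w : G | w * v = v * w} :=
        isClosed_eq (continuous_id.mul continuous_const) (continuous_const.mul continuous_id)
      exact closure_minimal hsub hcl hu
    have hφH : Γn ≤ Subgroup.map φ ((Subgroup.zpowers γn).topologicalClosure) := by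
      apply Subgroup.topologicalClosure_minimal
      · rw [Subgroup.zpowers_le]
        exact ⟨γn, (Subgroup.le_topologicalClosure _) (Subgroup.mem_zpowers γn), hγ⟩
      · have hcpt : IsCompact (((Subgroup.zpowers γn).topologicalClosure : Subgroup G) : Set G) :=
          (Subgroup.isClosed_topologicalClosure _).isCompact
        have himg := (hcpt.image hφc).isClosed
        have : (Subgroup.map φ ((Subgroup.zpowers γn).topologicalClosure) : Set _) =
            φ '' (((Subgroup.zpowers γn).topologicalClosure : Subgroup G) : Set G) :=
          Subgroup.coe_map _ _
        rw [this]
        exact himg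
    have hdecomp : ∀ g ∈ Gn, ∃ u ∈ (Subgroup.zpowers γn).topologicalClosure,
        ∃ x ∈ X, g = u * x := by
      intro g hg
      rw [hGn, Subgroup.mem_comap] at hg
      obtain ⟨u, hu, hug⟩ := hφH hg
      refine ⟨u, hu, u⁻¹ * g, ?_, by group⟩
      rw [hmemX, map_mul, map_inv, hug]
      simp
    have hcommD : ∀ g ∈ Gn, ∀ h ∈ Gn, ⁅g, h⁆ ∈ D := by
      intro g hg h hh
      obtain ⟨u, hu, x, hx, rfl⟩ := hdecomp g hg
      obtain ⟨v, hv, y, hy, rfl⟩ := hdecomp h hh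
      obtain ⟨hu1, hu2, hu3, hu4⟩ := hHtopT hu
      obtain ⟨hv1, hv2, hv3, hv4⟩ := hHtopT hv
      have hxy : ⁅x, y⁆ = 1 := commutatorElement_eq_one_iff_commute.mpr (hXab x hx y hy)
      have huv : ⁅u, v⁆ = 1 := commutatorElement_eq_one_iff_commute.mpr (hcomm u hu v hv)
      rw [aux_comm1, aux_comm2 x v y, aux_comm2 u v y, hxy, huv, mul_one, mul_inv_cancel,
        mul_one, one_mul]
      have e1 : ⁅x, v⁆ ∈ D := by
        rw [← commutatorElement_inv]
        refine D.inv_mem ?_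
        rw [commutatorElement_def]
        exact hv1 x hx
      have e2 : ⁅u, y⁆ ∈ D := by
        rw [commutatorElement_def]
        exact hu1 y hy
      exact D.mul_mem (hu3 _ e1) (hv3 _ e2)
    have hmapeq : Subgroup.map Gn.subtype (commutator ↥Gn) = ⁅Gn, Gn⁆ := by
      have h0 : commutator ↥Gn = ⁅(⊤ : Subgroup ↥Gn), ⊤⁆ := rfl
      rw [h0, Subgroup.map_commutator]
      congr 1 <;> rw [← MonoidHom.range_eq_map, Subgroup.range_subtype]
    rw [hmapeq]
    refine le_antisymm ?_ ?_
    · refine Subgroup.topologicalClosure_minimal _ ?_ hDclosed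
      exact Subgroup.commutator_le.mpr hcommD
    · refine Subgroup.topologicalClosure_minimal _ ?_ (Subgroup.isClosed_topologicalClosure _)
      refine le_trans ?_ (Subgroup.le_topologicalClosure _)
      rw [Subgroup.closure_le]
      rintro _ ⟨x, hx, rfl⟩
      have e : γn * x * γn⁻¹ * x⁻¹ = ⁅γn, x⁆ := (commutatorElement_def _ _).symm
      rw [SetLike.mem_coe, e]
      exact Subgroup.commutator_mem_commutator hγGn (hXGn hx)
end
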